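/- Let G be a nonnegative, integrable, (h,m)-convex function on an interval J containing [ν, μ] and the points ν/m, μ/m, μ/m², with ν < μ, m ∈ (0,1], and h nonnegative and integrable on [0,1] with h not identically zero. Then G((ν+μ)/2) ≤ h(1/2) · (1/(μ-ν)) ∫_ν^μ [G(x) + m·G(x/m)] dx. -/

import Mathlib

theorem hm_convex_HH_left
    (ν μ m : ℝ) (hνμ : ν < μ) (hm : m ∈ Set.Ioc (0:ℝ) 1)
    (J : Set ℝ) (hJint : Set.OrdConnected J)
    (hJ : Set.Icc ν μ ⊆ J) (hνm : ν / m ∈ J) (hμm : μ / m ∈ J) (hμm2 : μ / m ^ 2 ∈ J)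
    (h : ℝ → ℝ) (hh : ∀ γ ∈ Set.Icc (0:ℝ) 1, 0 ≤ h γ)
    (hhne : ∃ γ ∈ Set.Icc (0:ℝ) 1, h γ ≠ 0)
    (hhint : IntervalIntegrable h MeasureTheory.volume 0 1)
    (G : ℝ → ℝ)
    (hGnonneg : ∀ x ∈ J, 0 ≤ G x)
    (hGint : IntervalIntegrable G MeasureTheory.volume ν μ)
    (hGmint : IntervalIntegrable (fun x => G (x / m)) MeasureTheory.volume ν μ)
    (hG : ∀ x ∈ J, ∀ y ∈ J, ∀ γ ∈ Set.Icc (0:ℝ) 1,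
      G (γ * x + m * (1 - γ) * y) ≤ h γ * G x + m * h (1 - γ) * G y) :
    G ((ν + μ) / 2) ≤ h (1/2) * ((1 / (μ - ν)) * ∫ x in ν..μ, (G x + m * G (x / m))) := by
  obtain ⟨hm0, hm1⟩ := hm
  have hm0' : m ≠ 0 := ne_of_gt hm0
  have hsub : (0:ℝ) < μ - ν := sub_pos.mpr hνμ
  have hc1 : ν - μ ≠ 0 := by linarith
  have hc2 : μ - ν ≠ 0 := ne_of_gt hsub
  -- integrability of the two composed functions on [0,1]
  have int1 : IntervalIntegrable (fun t => G ((ν - μ) * t + μ)) MeasureTheory.volume 0 1 := by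
    have := (hGint.comp_add_right μ).comp_mul_left (c := ν - μ)
    simpa [sub_self, div_self hc1, zero_div] using this.symm
  have int2 : IntervalIntegrable (fun t => G (((μ - ν) * t + ν) / m)) MeasureTheory.volume 0 1 := by
    have := (hGmint.comp_add_right ν).comp_mul_left (c := μ - ν)
    simpa [sub_self, div_self hc2, zero_div] using this
  -- pointwise inequality
  have key : ∀ t ∈ Set.Icc (0:ℝ) 1,
      G ((ν + μ) / 2) ≤ h (1/2) * G ((ν - μ) * t + μ)
        + m * h (1/2) * G (((μ - ν) * t + ν) / m) := by
    intro t ht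
    obtain ⟨ht0, ht1⟩ := ht
    have hxmem : (ν - μ) * t + μ ∈ Set.Icc ν μ := ⟨by nlinarith, by nlinarith⟩
    have hy0mem : (μ - ν) * t + ν ∈ Set.Icc ν μ := ⟨by nlinarith, by nlinarith⟩
    have hyJ : ((μ - ν) * t + ν) / m ∈ J := by
      apply hJint.out hνm hμm
      constructor
      · exact (div_le_div_iff_of_pos_right hm0).mpr hy0mem.1
      · exact (div_le_div_iff_of_pos_right hm0).mpr hy0mem.2
    have := hG _ (hJ hxmem) _ hyJ (1/2) ⟨by norm_num, by norm_num⟩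
    have harg : (1/2 : ℝ) * ((ν - μ) * t + μ) + m * (1 - 1/2) * (((μ - ν) * t + ν) / m)
        = (ν + μ) / 2 := by
      field_simp
      ring
    rw [harg] at this
    norm_num at this ⊢
    linarith
  -- integrate the pointwise inequality over [0,1]
  have mono := intervalIntegral.integral_mono_on (by norm_num : (0:ℝ) ≤ 1)
    (intervalIntegrable_const (c := G ((ν + μ) / 2)))
    (((int1.const_mul (h (1/2))).add (int2.const_mul (m * h (1/2)))))
    key
  simp only [intervalIntegral.integral_const, smul_eq_mul, sub_zero, one_mul] at mono
  -- compute the right-hand side integral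
  have e1 : (∫ t in (0:ℝ)..1, G ((ν - μ) * t + μ))
      = (μ - ν)⁻¹ * ∫ x in ν..μ, G x := by
    rw [intervalIntegral.integral_comp_mul_add G hc1 μ]
    simp only [mul_zero, zero_add, mul_one, smul_eq_mul]
    rw [intervalIntegral.integral_symm]
    have : ν - μ + μ = ν := by ring
    rw [this]
    field_simp
    ring
  have e2 : (∫ t in (0:ℝ)..1, G (((μ - ν) * t + ν) / m))
      = (μ - ν)⁻¹ * ∫ x in ν..μ, G (x / m) := by
    rw [intervalIntegral.integral_comp_mul_add (fun x => G (x / m)) hc2 ν]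
    simp only [mul_zero, zero_add, mul_one, smul_eq_mul]
    have : μ - ν + ν = μ := by ring
    rw [this]
  have esplit : (∫ x in ν..μ, (G x + m * G (x / m)))
      = (∫ x in ν..μ, G x) + m * ∫ x in ν..μ, G (x / m) := by
    rw [intervalIntegral.integral_add hGint (hGmint.const_mul m),
      intervalIntegral.integral_const_mul]
  calc G ((ν + μ) / 2)
      ≤ ∫ t in (0:ℝ)..1, (h (1/2) * G ((ν - μ) * t + μ)
          + m * h (1/2) * G (((μ - ν) * t + ν) / m)) := mono
    _ = h (1/2) * ((1 / (μ - ν)) * ∫ x in ν..μ, (G x + m * G (x / m))) := by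
        rw [intervalIntegral.integral_add (int1.const_mul _) (int2.const_mul _),
          intervalIntegral.integral_const_mul, intervalIntegral.integral_const_mul,
          e1, e2, esplit]
        field_simp
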